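/- Every nonempty word w over a finite totally ordered alphabet admits a unique factorization w = ℓ₁ℓ₂...ℓ_k where each ℓ_j is a Lyndon word and ℓ₁ ≥ ℓ₂ ≥ ... ≥ ℓ_k in lexicographic order. -/

import Mathlib

/-- A nonempty word is Lyndon if it is lexicographically strictly smaller than
all of its proper nonempty suffixes. -/
def IsLyndon {α : Type*} [LinearOrder α] (w : List α) : Prop :=
  w ≠ [] ∧ ∀ s : List α, s <:+ w → s ≠ [] → s ≠ w → List.Lex (· < ·) w s

namespace CFL

variable {α : Type*} [LinearOrder α]

instance : IsTrans (List α) (List.Lex (· < ·)) := ⟨fun _ _ _ => lt_trans (α := List α)⟩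

theorem lex_of_prefix {u v : List α} (h : u <+: v) (hne : u ≠ v) :
    List.Lex (· < ·) u v := by
  obtain ⟨t, rfl⟩ := h
  cases t with
  | nil => simp at hne
  | cons a t =>
    simpa using List.Lex.append_left (· < ·) (List.Lex.nil : List.Lex (· < ·) [] (a :: t)) u

theorem lex_append_of_not_prefix : ∀ {u v : List α}, List.Lex (· < ·) u v → ¬ u <+: v →
    ∀ (x y : List α), List.Lex (· < ·) (u ++ x) (v ++ y)
  | _, _, .nil, hp, _, _ => absurd List.nil_prefix hp
  | _, _, .cons h, hp, x, y =>
    .cons (lex_append_of_not_prefix h (fun hq => hp (List.cons_prefix_cons.mpr ⟨rfl, hq⟩)) x y)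
  | _, _, .rel h, _, _, _ => .rel h

theorem isLyndon_singleton (a : α) : IsLyndon [a] := by
  refine ⟨by simp, fun s hs hne hne' => ?_⟩
  rcases List.suffix_cons_iff.mp hs with h | h
  · exact absurd h hne'
  · exact absurd (List.suffix_nil.mp h) hne

theorem suffix_append_cases {s u v : List α} (h : s <:+ u ++ v) :
    s <:+ v ∨ ∃ u', u' <:+ u ∧ s = u' ++ v := by
  rcases le_or_gt s.length v.length with hle | hlt
  · exact Or.inl (List.suffix_of_suffix_length_le h (List.suffix_append u v) hle)
  · have hv : v <:+ s := List.suffix_of_suffix_length_le (List.suffix_append u v) h hlt.le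
    obtain ⟨u', rfl⟩ := hv
    obtain ⟨t, ht⟩ := h
    refine Or.inr ⟨u', ⟨t, ?_⟩, rfl⟩
    have h2 : (t ++ u') ++ v = u ++ v := by simpa [List.append_assoc] using ht
    exact List.append_cancel_right h2

theorem lyndon_append {u v : List α} (hu : IsLyndon u) (hv : IsLyndon v)
    (huv : List.Lex (· < ·) u v) :
    IsLyndon (u ++ v) ∧ List.Lex (· < ·) (u ++ v) v := by
  have hne : u ≠ v := fun h => irrefl _ (h ▸ huv)
  have key : List.Lex (· < ·) (u ++ v) v := by
    by_cases hp : u <+: v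
    · obtain ⟨w, rfl⟩ := hp
      have hwne : w ≠ u ++ w := by
        intro h
        have hlen := congrArg List.length h
        simp only [List.length_append] at hlen
        have : u.length = 0 := by omega
        exact hu.1 (List.length_eq_zero_iff.mp this)
      have hw : w ≠ [] := by rintro rfl; simp at hne
      have h1 : List.Lex (· < ·) (u ++ w) w :=
        hv.2 w (List.suffix_append u w) hw hwne
      exact List.Lex.append_left _ h1 u
    · simpa using lex_append_of_not_prefix huv hp v []
  refine ⟨⟨fun h => hu.1 (List.append_eq_nil_iff.mp h).1, fun s hs hsne hstot => ?_⟩, key⟩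
  rcases suffix_append_cases hs with hsv | ⟨u', hu', rfl⟩
  · rcases eq_or_ne s v with rfl | hsv'
    · exact key
    · exact _root_.trans key (hv.2 s hsv hsne hsv')
  · rcases eq_or_ne u' [] with rfl | hu'ne
    · simpa using key
    · have hu'u : u' ≠ u := fun h => hstot (by rw [h])
      have hlex : List.Lex (· < ·) u u' := hu.2 u' hu' hu'ne hu'u
      have hnp : ¬ u <+: u' := fun hp =>
        hu'u (hp.eq_of_length (le_antisymm hp.length_le hu'.length_le)).symm
      exact lex_append_of_not_prefix hlex hnp v v

theorem lex_total : ∀ (u v : List α), ¬ (v = u ∨ List.Lex (· < ·) v u) →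
    List.Lex (· < ·) u v
  | [], [], h => absurd (Or.inl rfl) h
  | [], _ :: _, _ => List.Lex.nil
  | _ :: _, [], h => absurd (Or.inr List.Lex.nil) h
  | a :: u, b :: v, h => by
    rcases lt_trichotomy a b with hab | rfl | hab
    · exact List.Lex.rel hab
    · refine List.Lex.cons (lex_total u v ?_)
      rintro (rfl | hl)
      · exact h (Or.inl rfl)
      · exact h (Or.inr (List.Lex.cons hl))
    · exact absurd (Or.inr (List.Lex.rel hab)) h

abbrev Dec (L : List (List α)) : Prop :=
  L.Chain' (fun u v => v = u ∨ List.Lex (· < ·) v u)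

def ins (u : List α) : List (List α) → List (List α)
  | [] => [u]
  | m :: M => if m = u ∨ List.Lex (· < ·) m u then u :: m :: M else ins (u ++ m) M

theorem ins_spec : ∀ (M : List (List α)) (u : List α), IsLyndon u → (∀ ℓ ∈ M, IsLyndon ℓ) →
    Dec M → (ins u M).flatten = u ++ M.flatten ∧ (∀ ℓ ∈ ins u M, IsLyndon ℓ) ∧ Dec (ins u M)
  | [], u, hu, _, _ => by
    refine ⟨by simp [ins], ?_, by simp [ins, Dec, List.Chain']⟩
    intro ℓ hℓ
    simp only [ins, List.mem_singleton] at hℓ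
    exact hℓ ▸ hu
  | m :: M, u, hu, hM, hD => by
    rw [ins]
    split_ifs with h
    · refine ⟨by simp, ?_, ?_⟩
      · intro ℓ hℓ
        rcases List.mem_cons.mp hℓ with rfl | hℓ
        · exact hu
        · exact hM ℓ hℓ
      · exact List.isChain_cons.mpr ⟨fun y hy => by simp_all, hD⟩
    · have hum : List.Lex (· < ·) u m := lex_total u m h
      have hmerge := lyndon_append hu (hM m (by simp)) hum
      obtain ⟨h1, h2, h3⟩ := ins_spec M (u ++ m) hmerge.1
        (fun ℓ hℓ => hM ℓ (by simp [hℓ])) hD.tail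
      exact ⟨by simp [h1, List.append_assoc], h2, h3⟩

theorem exists_fact (w : List α) :
    ∃ L : List (List α), w = L.flatten ∧ (∀ ℓ ∈ L, IsLyndon ℓ) ∧ Dec L := by
  induction w with
  | nil => exact ⟨[], by simp, by simp, by simp [Dec, List.Chain']⟩
  | cons a t ih =>
    obtain ⟨L, hfl, hly, hd⟩ := ih
    obtain ⟨h1, h2, h3⟩ := ins_spec L [a] (isLyndon_singleton a) hly hd
    exact ⟨ins [a] L, by rw [h1, ← hfl]; rfl, h2, h3⟩

theorem le_trans' {a b c : List α} (h1 : a = b ∨ List.Lex (· < ·) a b)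
    (h2 : b = c ∨ List.Lex (· < ·) b c) : a = c ∨ List.Lex (· < ·) a c := by
  rcases h1 with rfl | h1 <;> rcases h2 with rfl | h2
  · exact Or.inl rfl
  · exact Or.inr h2
  · exact Or.inr h1
  · exact Or.inr (_root_.trans h1 h2)

theorem chain_le {m : List α} : ∀ {M : List (List α)}, Dec (m :: M) →
    ∀ x ∈ M, x = m ∨ List.Lex (· < ·) x m
  | [], _, x, hx => absurd hx List.not_mem_nil
  | m₂ :: M, hD, x, hx => by
    have h1 : m₂ = m ∨ List.Lex (· < ·) m₂ m := (List.isChain_cons_cons.mp hD).1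
    have h2 : Dec (m₂ :: M) := (List.isChain_cons_cons.mp hD).2
    rcases List.mem_cons.mp hx with rfl | hx
    · exact h1
    · exact le_trans' (chain_le h2 x hx) h1

theorem key_aux {b ℓ : List α} (hℓ : IsLyndon ℓ) (hbℓ : List.Lex (· < ·) b ℓ) :
    ∀ (M : List (List α)), (∀ x ∈ M, IsLyndon x) →
    (∀ x ∈ M, x = b ∨ List.Lex (· < ·) x b) →
    ∀ r, r <+: M.flatten → r <:+ ℓ → r ≠ ℓ → r ≠ [] → False
  | [], _, _, r, hpre, _, _, hrne => hrne (List.prefix_nil.mp (by simpa using hpre))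
  | x :: M, hly, hle, r, hpre, hsuf, hrℓ, hrne => by
    rw [List.flatten_cons] at hpre
    have hℓr : List.Lex (· < ·) ℓ r := hℓ.2 r hsuf hrne hrℓ
    have hxb := hle x (by simp)
    have hxne : x ≠ [] := (hly x (by simp)).1
    rcases le_or_gt r.length x.length with hlen | hlen
    · have hrx : r <+: x :=
        List.prefix_of_prefix_length_le hpre (List.prefix_append x M.flatten) hlen
      have hrb : r = b ∨ List.Lex (· < ·) r b := by
        rcases eq_or_ne r x with rfl | hne
        · exact hxb
        · exact le_trans' (Or.inr (lex_of_prefix hrx hne)) hxb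
      rcases hrb with rfl | hrb
      · exact asymm hℓr hbℓ
      · exact asymm (_root_.trans hℓr hrb) hbℓ
    · have hxr : x <+: r :=
        List.prefix_of_prefix_length_le (List.prefix_append x M.flatten) hpre hlen.le
      obtain ⟨r', rfl⟩ := hxr
      have hr' : r' <+: M.flatten := by
        obtain ⟨t, ht⟩ := hpre
        refine ⟨t, List.append_cancel_left (as := x) ?_⟩
        simpa [List.append_assoc] using ht
      have hr's : r' <:+ ℓ := (List.suffix_append x r').trans hsuf
      rcases eq_or_ne r' [] with rfl | hr'ne
      · rcases hxb with rfl | hxb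
        · exact asymm hℓr (by simpa using hbℓ)
        · exact asymm (_root_.trans hℓr (by simpa using hxb)) hbℓ
      · have hr'ℓ : r' ≠ ℓ := by
          intro h
          have h1 : (x ++ r').length ≤ ℓ.length := hsuf.length_le
          have h2 : 0 < x.length := List.length_pos_iff.mpr hxne
          have h3 : r'.length = ℓ.length := by rw [h]
          simp only [List.length_append] at h1
          omega
        exact key_aux hℓ hbℓ M (fun y hy => hly y (by simp [hy]))
          (fun y hy => hle y (by simp [hy])) r' hr' hr's hr'ℓ hr'ne

theorem length_le {ℓ m : List α} {L M : List (List α)}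
    (hℓ : IsLyndon ℓ) (hm : IsLyndon m) (hMly : ∀ x ∈ M, IsLyndon x) (hMd : Dec (m :: M))
    (heq : ℓ ++ L.flatten = m ++ M.flatten) : ℓ.length ≤ m.length := by
  by_contra hlen
  push_neg at hlen
  have hw2 : m <+: ℓ ++ L.flatten := by
    rw [heq]; exact List.prefix_append m M.flatten
  have hmℓ : m <+: ℓ :=
    List.prefix_of_prefix_length_le hw2 (List.prefix_append ℓ L.flatten) hlen.le
  obtain ⟨r, rfl⟩ := hmℓ
  have hmne : m ≠ [] := hm.1
  have hrne : r ≠ [] := by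
    rintro rfl
    simp at hlen
  have hbℓ : List.Lex (· < ·) m (m ++ r) := by
    refine lex_of_prefix (List.prefix_append m r) ?_
    intro h
    have := congrArg List.length h
    simp only [List.length_append] at this
    have : r.length = 0 := by omega
    exact hrne (List.length_eq_zero_iff.mp this)
  have hrpre : r <+: M.flatten := by
    refine ⟨L.flatten, List.append_cancel_left (as := m) ?_⟩
    simpa [List.append_assoc] using heq
  have hrℓ : r ≠ m ++ r := by
    intro h
    have := congrArg List.length h
    simp only [List.length_append] at this
    have : m.length = 0 := by omega
    exact hmne (List.length_eq_zero_iff.mp this)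
  exact key_aux hℓ hbℓ M hMly (chain_le hMd) r hrpre
    (List.suffix_append m r) hrℓ hrne

theorem flatten_ne_nil {m : List α} {M : List (List α)} (hm : m ≠ []) :
    (m :: M).flatten ≠ [] := by
  simp only [List.flatten_cons, ne_eq, List.append_eq_nil_iff]
  tauto

theorem unique_fact : ∀ (L M : List (List α)), (∀ x ∈ L, IsLyndon x) → Dec L →
    (∀ x ∈ M, IsLyndon x) → Dec M → L.flatten = M.flatten → L = M
  | [], [], _, _, _, _, _ => rfl
  | [], m :: M, _, _, hM, _, h =>
    absurd h.symm (by simpa using flatten_ne_nil (hM m (by simp)).1)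
  | ℓ :: L, [], hL, _, _, _, h =>
    absurd h (by simpa using flatten_ne_nil (hL ℓ (by simp)).1)
  | ℓ :: L, m :: M, hL, hLd, hM, hMd, h => by
    have h' : ℓ ++ L.flatten = m ++ M.flatten := by simpa using h
    have hℓ := hL ℓ (by simp)
    have hm := hM m (by simp)
    have h1 := length_le hℓ hm (fun x hx => hM x (by simp [hx])) hMd h'
    have h2 := length_le hm hℓ (fun x hx => hL x (by simp [hx])) hLd h'.symm
    have hw2 : ℓ <+: m ++ M.flatten := by
      rw [← h']; exact List.prefix_append ℓ L.flatten
    have hℓm : ℓ = m :=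
      (List.prefix_of_prefix_length_le hw2 (List.prefix_append m M.flatten) h1).eq_of_length
        (le_antisymm h1 h2)
    subst hℓm
    have hfl : L.flatten = M.flatten := List.append_cancel_left h'
    have := unique_fact L M (fun x hx => hL x (by simp [hx])) hLd.tail
      (fun x hx => hM x (by simp [hx])) hMd.tail hfl
    rw [this]

end CFL

/-- Canonical factorization: every nonempty word admits a unique factorization
`w = ℓ₁ℓ₂⋯ℓ_k` into a lexicographically weakly decreasing sequence of Lyndon
words. -/
theorem canonical_factorization {α : Type*} [LinearOrder α] (w : List α)
    (hw : w ≠ []) :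
    ∃! L : List (List α), w = L.flatten ∧ (∀ ℓ ∈ L, IsLyndon ℓ) ∧
      L.Chain' (fun u v => v = u ∨ List.Lex (· < ·) v u) := by
  obtain ⟨L, h1, h2, h3⟩ := CFL.exists_fact w
  refine ⟨L, ⟨h1, h2, h3⟩, ?_⟩
  rintro M ⟨g1, g2, g3⟩
  exact CFL.unique_fact M L g2 g3 h2 h3 (by rw [← g1, ← h1])
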